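/- arXiv:2502.19613 — 3 statements merged into one kernel-verified Lean document; each statement's English description precedes it below -/
import Mathlib

section
/- Let A be a nonempty finite type, let p : A → ℝ be a probability mass function with p(a) > 0 for every a ∈ A, let f : A → ℝ, and let η > 0. Set Z = Σ_{a ∈ A} p(a) · exp(f(a)/η). Then for every probability mass function r on A, the KL-regularized objective is bounded by the log-partition value: Σ_{a ∈ A} r(a) · f(a) − η · KL(r‖p) ≤ η · log Z. -/
/-- **Log-partition upper bound for the KL-regularized objective.**
For a nonempty finite type `A`, a reference pmf `p` with full support, `f : A → ℝ`
and `η > 0`, let `Z = ∑ a, p a * exp (f a / η)`.  Then for every pmf `r` on `A`,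
`∑ a, r a * f a − η · KL(r‖p) ≤ η · log Z`,
where `KL(r‖p) = ∑ a, r a * log (r a / p a)` (with the convention `0 · log 0 = 0`,
which holds automatically since the `a`-th summand carries the factor `r a`). -/
theorem kl_regularized_objective_le_log_partition {A : Type*} [Fintype A] [Nonempty A]
    (p : A → ℝ) (hp_pos : ∀ a, 0 < p a) (hp_sum : ∑ a, p a = 1)
    (f : A → ℝ) (η : ℝ) (hη : 0 < η)
    (Z : ℝ) (hZ : Z = ∑ a, p a * Real.exp (f a / η))
    (r : A → ℝ) (hr_nonneg : ∀ a, 0 ≤ r a) (hr_sum : ∑ a, r a = 1) :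
    ∑ a, r a * f a - η * (∑ a, r a * Real.log (r a / p a)) ≤ η * Real.log Z := by
  classical
  set S : Finset A := Finset.univ.filter (fun a => r a ≠ 0) with hS
  have hrS : ∀ a ∈ S, 0 < r a := by
    intro a ha
    rw [hS, Finset.mem_filter] at ha
    exact lt_of_le_of_ne (hr_nonneg a) (Ne.symm ha.2)
  have hrS_sum : ∑ a ∈ S, r a = 1 := by
    rw [← hr_sum]
    exact Finset.sum_filter_ne_zero _
  -- the points
  set x : A → ℝ := fun a => p a * Real.exp (f a / η) / r a with hx
  have hxpos : ∀ a ∈ S, x a ∈ Set.Ioi (0:ℝ) := by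
    intro a ha
    exact div_pos (mul_pos (hp_pos a) (Real.exp_pos _)) (hrS a ha)
  have jensen : ∑ a ∈ S, r a • Real.log (x a) ≤ Real.log (∑ a ∈ S, r a • x a) :=
    strictConcaveOn_log_Ioi.concaveOn.le_map_sum
      (fun a ha => (hrS a ha).le) hrS_sum hxpos
  have hrx : ∀ a ∈ S, r a • x a = p a * Real.exp (f a / η) := by
    intro a ha
    rw [smul_eq_mul, hx]
    exact mul_div_cancel₀ _ (ne_of_gt (hrS a ha))
  have hsum_le : ∑ a ∈ S, r a • x a ≤ Z := by
    rw [hZ, Finset.sum_congr rfl hrx]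
    exact Finset.sum_le_sum_of_subset_of_nonneg (Finset.subset_univ S)
      (fun a _ _ => (mul_pos (hp_pos a) (Real.exp_pos _)).le)
  have hsum_pos : 0 < ∑ a ∈ S, r a • x a := by
    have : S.Nonempty := by
      by_contra h
      rw [Finset.not_nonempty_iff_eq_empty] at h
      simp [h] at hrS_sum
    obtain ⟨a, ha⟩ := this
    refine Finset.sum_pos' (fun b hb => ?_) ⟨a, ha, ?_⟩
    · exact smul_nonneg (hrS b hb).le (hxpos b hb).le
    · exact smul_pos (hrS a ha) (hxpos a ha)
  have hlog_le : Real.log (∑ a ∈ S, r a • x a) ≤ Real.log Z :=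
    Real.log_le_log hsum_pos hsum_le
  -- rewrite LHS
  have key : ∑ a, r a * f a - η * (∑ a, r a * Real.log (r a / p a))
      = η * ∑ a ∈ S, r a • Real.log (x a) := by
    have h1 : ∑ a, r a * f a = ∑ a ∈ S, r a * f a := by
      rw [eq_comm]
      apply Finset.sum_subset (Finset.subset_univ S)
      intro a _ ha
      rw [hS, Finset.mem_filter] at ha
      push_neg at ha
      simp [ha (Finset.mem_univ a)]
    have h2 : ∑ a, r a * Real.log (r a / p a) = ∑ a ∈ S, r a * Real.log (r a / p a) := by
      rw [eq_comm]
      apply Finset.sum_subset (Finset.subset_univ S)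
      intro a _ ha
      rw [hS, Finset.mem_filter] at ha
      push_neg at ha
      simp [ha (Finset.mem_univ a)]
    rw [h1, h2]
    simp only [Finset.mul_sum, smul_eq_mul, ← Finset.sum_sub_distrib]
    apply Finset.sum_congr rfl
    intro a ha
    have hr0 := hrS a ha
    have hp0 := hp_pos a
    have hlogx : Real.log (x a) = f a / η - Real.log (r a / p a) := by
      rw [hx]
      rw [Real.log_div (by positivity) (ne_of_gt hr0),
        Real.log_mul (ne_of_gt hp0) (Real.exp_ne_zero _), Real.log_exp,
        Real.log_div (ne_of_gt hr0) (ne_of_gt hp0)]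
      ring
    rw [hlogx]
    field_simp
  rw [key]
  exact mul_le_mul_of_nonneg_left (jensen.trans hlog_le) hη.le
end

section
/- Consider a finite-horizon KL-regularized MDP with horizon H ≥ 1, finite nonempty state space S, finite nonempty action space A, deterministic transitions t_h : S → A → S for h = 1,…,H−1, terminal reward u : S → A → ℝ, reference policies π_ref^h : S → A → ℝ (each π_ref^h(s) a probability mass function on A with full support), and η > 0. Define backward: Q_H(s,a) = u(s,a); V_h(s) = η · log(Σ_{a ∈ A} π_ref^h(s)(a) · exp(Q_h(s,a)/η)); Q_h(s,a) = V_{h+1}(t_h(s,a)) for h < H; and the Gibbs policies π*_h(s)(a) = π_ref^h(s)(a) · exp((Q_h(s,a) − V_h(s))/η). Then for every trajectory, i.e. every sequence of states s_1,…,s_H and actions a_1,…,a_H with s_{h+1} = t_h(s_h, a_h) for h = 1,…,H−1, the log policy ratios telescope: η · Σ_{h=1}^{H} log(π*_h(s_h)(a_h) / π_ref^h(s_h)(a_h)) = u(s_H, a_H) − V_1(s_1). -/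
/-- **Telescoping of Gibbs log policy ratios along a trajectory.**
In the finite-horizon KL-regularized MDP (horizon `H ≥ 1`, finite nonempty state
space `S` and action space `A`, deterministic transitions `t`, terminal reward `u`,
reference policies `πref h s` which are pmfs on `A` with full support, `η > 0`),
define backward `Q H s a = u s a`,
`V h s = η * log (∑ a, πref h s a * exp (Q h s a / η))` for `1 ≤ h ≤ H`,
`Q h s a = V (h+1) (t h s a)` for `1 ≤ h < H`, and the Gibbs policies
`πstar h s a = πref h s a * exp ((Q h s a − V h s) / η)`.
Then for every trajectory, i.e. states `s 1, …, s H` and actions `a 1, …, a H`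
with `s (h+1) = t h (s h) (a h)` for `1 ≤ h < H`, the log policy ratios telescope:
`η * ∑_{h=1}^{H} log (πstar h (s h) (a h) / πref h (s h) (a h))
  = u (s H) (a H) − V 1 (s 1)`. -/
theorem kl_regularized_mdp_log_ratio_telescope {S A : Type*} [Fintype S] [Nonempty S]
    [Fintype A] [Nonempty A]
    (H : ℕ) (hH : 1 ≤ H)
    (t : ℕ → S → A → S) (u : S → A → ℝ)
    (πref : ℕ → S → A → ℝ)
    (href_pos : ∀ h, 1 ≤ h → h ≤ H → ∀ s a, 0 < πref h s a)
    (href_sum : ∀ h, 1 ≤ h → h ≤ H → ∀ s, ∑ a, πref h s a = 1)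
    (η : ℝ) (hη : 0 < η)
    (Q : ℕ → S → A → ℝ) (V : ℕ → S → ℝ)
    (hQH : ∀ s a, Q H s a = u s a)
    (hV : ∀ h, 1 ≤ h → h ≤ H → ∀ s,
      V h s = η * Real.log (∑ a, πref h s a * Real.exp (Q h s a / η)))
    (hQ : ∀ h, 1 ≤ h → h < H → ∀ s a, Q h s a = V (h + 1) (t h s a))
    (πstar : ℕ → S → A → ℝ)
    (hπstar : ∀ h, 1 ≤ h → h ≤ H → ∀ s a,
      πstar h s a = πref h s a * Real.exp ((Q h s a - V h s) / η))
    (s : ℕ → S) (a : ℕ → A)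
    (htraj : ∀ h, 1 ≤ h → h < H → s (h + 1) = t h (s h) (a h)) :
    η * ∑ h ∈ Finset.Icc 1 H,
        Real.log (πstar h (s h) (a h) / πref h (s h) (a h))
      = u (s H) (a H) - V 1 (s 1) := by
  set W : ℕ → ℝ := fun h => if h ≤ H then V h (s h) else u (s H) (a H) with hW
  have key : ∀ h ∈ Finset.Icc 1 H,
      Real.log (πstar h (s h) (a h) / πref h (s h) (a h))
        = (W (h + 1) - W h) / η := by
    intro h hh
    rw [Finset.mem_Icc] at hh
    obtain ⟨h1, h2⟩ := hh
    have hp := href_pos h h1 h2 (s h) (a h)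
    rw [hπstar h h1 h2, mul_comm, mul_div_assoc, div_self (ne_of_gt hp),
      mul_one, Real.log_exp]
    congr 1
    have hWh : W h = V h (s h) := by simp [hW, h2]
    rcases eq_or_lt_of_le h2 with rfl | hlt
    · have : W (h + 1) = u (s h) (a h) := by simp [hW]
      rw [this, hWh, hQH]
    · have : W (h + 1) = V (h + 1) (s (h + 1)) := by simp [hW, Nat.succ_le_of_lt hlt]
      rw [this, hWh, hQ h h1 hlt, htraj h h1 hlt]
  rw [Finset.sum_congr rfl key]
  have hIcc : Finset.Icc 1 H = Finset.map ⟨fun i => i + 1, add_left_injective 1⟩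
      (Finset.range H) := by
    ext x
    simp only [Finset.mem_map, Finset.mem_Icc, Finset.mem_range,
      Function.Embedding.coeFn_mk]
    constructor
    · rintro ⟨hx1, hx2⟩; exact ⟨x - 1, by omega, by omega⟩
    · rintro ⟨i, hi, rfl⟩; omega
  rw [hIcc, Finset.sum_map]
  simp only [Function.Embedding.coeFn_mk]
  rw [← Finset.sum_div, Finset.sum_range_sub (fun i => W (i + 1))]
  have h1 : W 1 = V 1 (s 1) := by simp [hW, hH]
  have h2 : W (H + 1) = u (s H) (a H) := by simp [hW]
  rw [h1, h2]
  field_simp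
end

section
/- Let H ≥ 1, let S and A be nonempty finite types, let t_h : S → A → S for h = 1,…,H−1 be deterministic transitions, let π_ref^h, π_θ^h : S → A → ℝ be policies with π_ref^h(s)(a) > 0 and π_θ^h(s)(a) > 0 for all s, a, and let η > 0. Suppose there exist functions V_h : S → ℝ (h = 1,…,H) and Q_h : S → A → ℝ (h = 1,…,H) satisfying, for all h, s, a: η · log(π_θ^h(s)(a)/π_ref^h(s)(a)) = Q_h(s,a) − V_h(s), and Q_h(s,a) = V_{h+1}(t_h(s,a)) for h = 1,…,H−1. Define the trajectory utility u_θ of a trajectory (s_1, a_1, …, a_H) with s_{h+1} = t_h(s_h, a_h) as u_θ = Q_H(s_H, a_H). Then for any two trajectories τ^w = (s_1, a^w_1, …, a^w_H) and τ^l = (s_1, a^l_1, …, a^l_H) sharing the same initial state s_1 (with respective state sequences s^w_h، s^l_h generated by the transitions), the utility difference equals η times the difference of the accumulated log policy ratios: u_θ(τ^w) − u_θ(τ^l) = η · ( Σ_{h=1}^{H} log(π_θ^h(s^w_h)(a^w_h)/π_ref^h(s^w_h)(a^w_h)) − Σ_{h=1}^{H} log(π_θ^h(s^l_h)(a^l_h)/π_ref^h(s^l_h)(a^l_h))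 ). -/
/-- **M-DPO utility-difference identity.**
Let `H ≥ 1`, let `S` and `A` be nonempty finite types, let `t h : S → A → S`
(for `1 ≤ h < H`) be deterministic transitions, let `πref h, πθ h : S → A → ℝ`
be policies with `πref h s a > 0` and `πθ h s a > 0` for all `s, a`, and let
`η > 0`.  Suppose there exist functions `V h : S → ℝ` and `Q h : S → A → ℝ`
(for `1 ≤ h ≤ H`) satisfying
`η * log (πθ h s a / πref h s a) = Q h s a − V h s` for all `1 ≤ h ≤ H`, and
`Q h s a = V (h+1) (t h s a)` for all `1 ≤ h < H`.
The trajectory utility of a trajectory `(s 1, a 1, …, a H)` generated by the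
transitions is `uθ = Q H (s H) (a H)`.  Then for any two trajectories
`τʷ = (s 1, aʷ 1, …, aʷ H)` and `τˡ = (s 1, aˡ 1, …, aˡ H)` sharing the same
initial state, the utility difference equals `η` times the difference of the
accumulated log policy ratios. -/
theorem mdpo_utility_difference {S A : Type*} [Fintype S] [Nonempty S]
    [Fintype A] [Nonempty A]
    (H : ℕ) (hH : 1 ≤ H)
    (t : ℕ → S → A → S)
    (πref πθ : ℕ → S → A → ℝ)
    (href_pos : ∀ h, 1 ≤ h → h ≤ H → ∀ s a, 0 < πref h s a)
    (hθ_pos : ∀ h, 1 ≤ h → h ≤ H → ∀ s a, 0 < πθ h s a)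
    (η : ℝ) (hη : 0 < η)
    (V : ℕ → S → ℝ) (Q : ℕ → S → A → ℝ)
    (hlog : ∀ h, 1 ≤ h → h ≤ H → ∀ s a,
      η * Real.log (πθ h s a / πref h s a) = Q h s a - V h s)
    (hQ : ∀ h, 1 ≤ h → h < H → ∀ s a, Q h s a = V (h + 1) (t h s a))
    (sw sl : ℕ → S) (aw al : ℕ → A)
    (hinit : sw 1 = sl 1)
    (htrajw : ∀ h, 1 ≤ h → h < H → sw (h + 1) = t h (sw h) (aw h))
    (htrajl : ∀ h, 1 ≤ h → h < H → sl (h + 1) = t h (sl h) (al h)) :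
    Q H (sw H) (aw H) - Q H (sl H) (al H)
      = η * ((∑ h ∈ Finset.Icc 1 H,
            Real.log (πθ h (sw h) (aw h) / πref h (sw h) (aw h)))
          - ∑ h ∈ Finset.Icc 1 H,
            Real.log (πθ h (sl h) (al h) / πref h (sl h) (al h))) := by
  have key : ∀ (s : ℕ → S) (a : ℕ → A),
      (∀ h, 1 ≤ h → h < H → s (h + 1) = t h (s h) (a h)) →
      ∀ n, 1 ≤ n → n ≤ H →
      Q n (s n) (a n) = V 1 (s 1)
        + η * ∑ h ∈ Finset.Icc 1 n, Real.log (πθ h (s h) (a h) / πref h (s h) (a h)) := by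
    intro s a htraj n
    induction n with
    | zero => omega
    | succ m ih =>
      intro h1 hle
      rcases Nat.eq_or_lt_of_le h1 with h1' | h1'
      · simp only [← h1']
        rw [Finset.Icc_self, Finset.sum_singleton]
        have := hlog 1 le_rfl (by omega) (s 1) (a 1)
        linarith
      · have hm1 : 1 ≤ m := by omega
        have hmH : m ≤ H := by omega
        have step : V (m + 1) (s (m + 1)) = Q m (s m) (a m) := by
          rw [htraj m hm1 (by omega), ← hQ m hm1 (by omega)]
        have hsum : Finset.Icc 1 (m + 1) = insert (m + 1) (Finset.Icc 1 m) := by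
          ext x; simp [Finset.mem_Icc]; omega
        rw [hsum, Finset.sum_insert (by simp)]
        have hl := hlog (m + 1) (by omega) hle (s (m + 1)) (a (m + 1))
        have ihm := ih hm1 hmH
        nlinarith [hl, ihm, step]
  rw [key sw aw htrajw H hH le_rfl, key sl al htrajl H hH le_rfl, hinit]
  ring
end
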